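/- Let X be a periodic semigroup, e an idempotent of X, and for n ≥ 1 let Z_n = {z ∈ Z(X) : z^n ∈ H_e}. If for some ℓ ≥ 1 the set Z_ℓ \ H_e is infinite, then there exist a finite set F ⊆ Z_ℓ and an infinite set A ⊆ Z_ℓ \ F·X¹ such that A·A ⊆ F ∪ H_e ⊆ F·X¹ (where F·X¹ = F ∪ {fx : f ∈ F, x ∈ X}). -/

import Mathlib

/-- `spow x n` denotes the power `x^(n+1)` in a semigroup (so exponents `n ≥ 1` are
the values `spow x (n-1)`). -/
def spow {S : Type*} [Semigroup S] (x : S) : ℕ → S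
  | 0 => x
  | n + 1 => spow x n * x

/-- The `H`-class of `a` in a semigroup `S`:
`H_a = {x ∈ S | xS¹ = aS¹ ∧ S¹x = S¹a}`, computed in `S¹ = WithOne S`. -/
def HClass {S : Type*} [Semigroup S] (a : S) : Set S :=
  {x | {y : WithOne S | ∃ s : WithOne S, y = (x : WithOne S) * s} =
         {y : WithOne S | ∃ s : WithOne S, y = (a : WithOne S) * s} ∧
       {y : WithOne S | ∃ s : WithOne S, y = s * (x : WithOne S)} =
         {y : WithOne S | ∃ s : WithOne S, y = s * (a : WithOne S)}}

/-- The center `Z(S)` of a semigroup. -/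
def centerSet (S : Type*) [Semigroup S] : Set S := {z : S | ∀ x : S, z * x = x * z}

/-- The Clifford part `H(S)`: the union of all `H`-classes of idempotents
(equivalently, of all maximal subgroups). -/
def CliffordPart (S : Type*) [Semigroup S] : Set S :=
  {x : S | ∃ e : S, IsIdempotentElem e ∧ x ∈ HClass e}

/-- A semigroup is chain-finite if it contains no infinite chain, where a chain
is a set `C` with `x * y ∈ {x, y}` for all `x, y ∈ C`. -/
def ChainFinite (S : Type*) [Semigroup S] : Prop :=
  ∀ C : Set S, (∀ x ∈ C, ∀ y ∈ C, x * y = x ∨ x * y = y) → C.Finite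

/-- A semigroup is periodic if every element has an idempotent power `x^n`, `n ≥ 1`. -/
def IsPeriodicSemigroup (S : Type*) [Semigroup S] : Prop :=
  ∀ x : S, ∃ n : ℕ, IsIdempotentElem (spow x n)

/-- The maximal subgroup `H_e` of an idempotent `e` is bounded: some power `n ≥ 1`
of every element equals `e`. -/
def BoundedHClass {S : Type*} [Semigroup S] (e : S) : Prop :=
  ∃ n : ℕ, ∀ x ∈ HClass e, spow x n = e

/-- A semigroup `X` is `T₁S`-closed if for every topological semigroup `Y`
satisfying the `T₁` separation axiom and every injective homomorphism `h : X → Y`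
with discrete image, the image of `h` is closed in `Y`. -/
def IsT1SClosed (X : Type*) [Semigroup X] : Prop :=
  ∀ (Y : Type*) [Semigroup Y] [TopologicalSpace Y] [ContinuousMul Y] [T1Space Y],
    ∀ h : X →ₙ* Y, Function.Injective h → DiscreteTopology (Set.range h) →
      IsClosed (Set.range h)

/-- A semigroup `X` is `TzS`-closed if for every Hausdorff zero-dimensional
topological semigroup `Y` (i.e. the clopen sets form a base of the topology) and
every injective homomorphism `h : X → Y` with discrete image, the image of `h`
is closed in `Y`. -/
def IsTzSClosed (X : Type*) [Semigroup X] : Prop :=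
  ∀ (Y : Type*) [Semigroup Y] [TopologicalSpace Y] [ContinuousMul Y] [T2Space Y],
    TopologicalSpace.IsTopologicalBasis {s : Set Y | IsClopen s} →
    ∀ h : X →ₙ* Y, Function.Injective h → DiscreteTopology (Set.range h) →
      IsClosed (Set.range h)

section Aux
variable {X : Type*} [Semigroup X]

def Cen (z : X) : Prop := ∀ x : X, z * x = x * z

lemma Cen.mul {z w : X} (hz : Cen z) (hw : Cen w) : Cen (z * w) := by
  intro x; rw [mul_assoc, hw x, ← mul_assoc, hz x, mul_assoc]

lemma spow_add (x : X) (a b : ℕ) : spow x a * spow x b = spow x (a + b + 1) := by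
  induction b with
  | zero => rfl
  | succ b ih =>
      show spow x a * (spow x b * x) = _
      rw [← mul_assoc, ih]; rfl

lemma spow_succ' (x : X) (k : ℕ) : spow x (k + 1) = x * spow x k := by
  have := spow_add x 0 k
  simpa [Nat.add_comm, show spow x 0 = x from rfl] using this.symm

lemma cen_spow {z : X} (hz : Cen z) (k : ℕ) : Cen (spow z k) := by
  induction k with
  | zero => exact hz
  | succ k ih => exact ih.mul hz

lemma cen_spow_mul {z : X} (hz : Cen z) (x : X) (k : ℕ) :
    spow (z * x) k = spow z k * spow x k := by
  induction k with
  | zero => rfl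
  | succ k ih =>
      show spow (z * x) k * (z * x) = (spow z k * z) * (spow x k * x)
      rw [ih, mul_assoc, ← mul_assoc (spow x k) z x, ← hz (spow x k),
        ← mul_assoc, ← mul_assoc, mul_assoc (spow z k * z)]

lemma spow_spow (x : X) (k j : ℕ) : spow (spow x k) j = spow x (k + j + k * j) := by
  induction j with
  | zero => simp [spow]
  | succ j ih =>
      show spow (spow x k) j * spow x k = _
      rw [ih, spow_add]
      congr 1
      ring

lemma rearr {z w : X} (hw : Cen w) (z' w' : X) :
    (z * w) * (z' * w') = (z * z') * (w * w') := by
  rw [mul_assoc, ← mul_assoc w z' w', hw z', mul_assoc z', ← mul_assoc, ← mul_assoc]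

variable (e : X)

lemma memH_iff (x : X) :
    x ∈ HClass e ↔ (x = e ∨ ∃ u, x = e * u) ∧ (x = e ∨ ∃ u, x = u * e) ∧
      (e = x ∨ ∃ u, e = x * u) ∧ (e = x ∨ ∃ u, e = u * x) := by
  constructor
  · rintro ⟨h1, h2⟩
    have hx1 : (x : WithOne X) ∈ {y : WithOne X | ∃ s : WithOne X, y = (x : WithOne X) * s} :=
      ⟨1, (mul_one _).symm⟩
    have he1 : (e : WithOne X) ∈ {y : WithOne X | ∃ s : WithOne X, y = (e : WithOne X) * s} :=
      ⟨1, (mul_one _).symm⟩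
    have hx2 : (x : WithOne X) ∈ {y : WithOne X | ∃ s : WithOne X, y = s * (x : WithOne X)} :=
      ⟨1, (one_mul _).symm⟩
    have he2 : (e : WithOne X) ∈ {y : WithOne X | ∃ s : WithOne X, y = s * (e : WithOne X)} :=
      ⟨1, (one_mul _).symm⟩
    have A1 : ∃ s : WithOne X, (x : WithOne X) = (e : WithOne X) * s := by rw [h1] at hx1; exact hx1
    have A2 : ∃ s : WithOne X, (x : WithOne X) = s * (e : WithOne X) := by rw [h2] at hx2; exact hx2
    have A3 : ∃ s : WithOne X, (e : WithOne X) = (x : WithOne X) * s := by rw [← h1] at he1; exact he1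
    have A4 : ∃ s : WithOne X, (e : WithOne X) = s * (x : WithOne X) := by rw [← h2] at he2; exact he2
    refine ⟨?_, ?_, ?_, ?_⟩
    · obtain ⟨s, hs⟩ := A1
      induction s using WithOne.recOneCoe with
      | one => exact Or.inl (by exact_mod_cast (by simpa using hs))
      | coe u => exact Or.inr ⟨u, by exact_mod_cast hs⟩
    · obtain ⟨s, hs⟩ := A2
      induction s using WithOne.recOneCoe with
      | one => exact Or.inl (by exact_mod_cast (by simpa using hs))
      | coe u => exact Or.inr ⟨u, by exact_mod_cast hs⟩
    · obtain ⟨s, hs⟩ := A3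
      induction s using WithOne.recOneCoe with
      | one => exact Or.inl (by exact_mod_cast (by simpa using hs))
      | coe u => exact Or.inr ⟨u, by exact_mod_cast hs⟩
    · obtain ⟨s, hs⟩ := A4
      induction s using WithOne.recOneCoe with
      | one => exact Or.inl (by exact_mod_cast (by simpa using hs))
      | coe u => exact Or.inr ⟨u, by exact_mod_cast hs⟩
  · rintro ⟨A1, A2, A3, A4⟩
    constructor
    · ext y
      constructor
      · rintro ⟨s, rfl⟩
        rcases A1 with rfl | ⟨u, rfl⟩
        · exact ⟨s, rfl⟩
        · exact ⟨(u : WithOne X) * s, by push_cast; rw [mul_assoc]⟩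
      · rintro ⟨s, rfl⟩
        rcases A3 with h | ⟨u, h⟩
        · exact ⟨s, by rw [h]⟩
        · exact ⟨(u : WithOne X) * s, by rw [h]; push_cast; rw [mul_assoc]⟩
    · ext y
      constructor
      · rintro ⟨s, rfl⟩
        rcases A2 with rfl | ⟨u, rfl⟩
        · exact ⟨s, rfl⟩
        · exact ⟨s * (u : WithOne X), by push_cast; rw [mul_assoc]⟩
      · rintro ⟨s, rfl⟩
        rcases A4 with h | ⟨u, h⟩
        · exact ⟨s, by rw [h]⟩
        · exact ⟨s * (u : WithOne X), by rw [h]; push_cast; rw [mul_assoc]⟩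

variable (he : IsIdempotentElem e)
include he

omit he in
lemma e_memH : e ∈ HClass e := ⟨rfl, rfl⟩

lemma H_left_id {h : X} (hh : h ∈ HClass e) : e * h = h := by
  obtain ⟨A1, -, -, -⟩ := (memH_iff e h).1 hh
  rcases A1 with rfl | ⟨u, rfl⟩
  · exact he
  · rw [← mul_assoc, he]

lemma H_right_id {h : X} (hh : h ∈ HClass e) : h * e = h := by
  obtain ⟨-, A2, -, -⟩ := (memH_iff e h).1 hh
  rcases A2 with rfl | ⟨u, rfl⟩
  · exact he
  · rw [mul_assoc, he]

omit he in
lemma H_right_div {g h : X} (hg : g ∈ HClass e) (hh : h ∈ HClass e) :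
    h = g ∨ ∃ u, h = g * u := by
  obtain ⟨A1, -, -, -⟩ := (memH_iff e h).1 hh
  obtain ⟨-, -, A3, -⟩ := (memH_iff e g).1 hg
  rcases A1 with rfl | ⟨u, rfl⟩
  · rcases A3 with h' | ⟨v, h'⟩
    · exact Or.inl h'
    · exact Or.inr ⟨v, h'⟩
  · rcases A3 with h' | ⟨v, h'⟩
    · exact Or.inr ⟨u, by rw [← h']⟩
    · exact Or.inr ⟨v * u, by rw [h', mul_assoc]⟩

omit he in
/-- core criterion: central `x` with some spow-power in `H` and `e * x = x` lies in `H`. -/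
lemma eabs {x : X} (hc : Cen x) (hm : ∃ m, spow x m ∈ HClass e) (hex : e * x = x) :
    x ∈ HClass e := by
  obtain ⟨m, hmH⟩ := hm
  have hxe : x * e = x := by rw [hc e]; exact hex
  obtain ⟨-, -, A3, A4⟩ := (memH_iff e (spow x m)).1 hmH
  refine (memH_iff e x).2 ⟨Or.inr ⟨x, hex.symm⟩, Or.inr ⟨x, hxe.symm⟩, ?_, ?_⟩
  · cases m with
    | zero => exact A3
    | succ k =>
        rw [spow_succ'] at A3
        rcases A3 with h' | ⟨u, h'⟩
        · exact Or.inr ⟨spow x k, h'⟩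
        · exact Or.inr ⟨spow x k * u, by rw [h', mul_assoc]⟩
  · cases m with
    | zero => exact A4
    | succ k =>
        rcases A4 with h' | ⟨u, h'⟩
        · exact Or.inr ⟨spow x k, h'⟩
        · exact Or.inr ⟨u * spow x k, by rw [mul_assoc]; exact h'⟩

lemma mono_step {x : X} (hc : Cen x) {k : ℕ} (hk : spow x k ∈ HClass e) :
    spow x (k + 1) ∈ HClass e := by
  have hek : e * spow x k = spow x k := H_left_id e he hk
  have hey : e * spow x (k + 1) = spow x (k + 1) := by
    show e * (spow x k * x) = spow x k * x
    rw [← mul_assoc, hek]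
  obtain ⟨-, -, A3, A4⟩ := (memH_iff e (spow x k)).1 hk
  refine (memH_iff e _).2 ⟨Or.inr ⟨spow x (k+1), hey.symm⟩,
    Or.inr ⟨spow x (k+1), by rw [cen_spow hc (k+1) e, hey]⟩, ?_, ?_⟩
  · rcases A3 with h' | ⟨u, h'⟩
    · have h2 : e = spow x (k + k + 1) := by rw [← spow_add, ← h', he]
      cases k with
      | zero => exact Or.inl h2
      | succ k' =>
          refine Or.inr ⟨spow x k', ?_⟩
          rw [spow_add, h2]
          congr 1
          omega
    · have h2 : e = spow x (k + k + 1) * (u * u) := by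
        conv_lhs => rw [← he]
        rw [h', ← spow_add]
        rw [mul_assoc, mul_assoc, ← mul_assoc u (spow x k) u, ← cen_spow hc k u, mul_assoc,
          ← mul_assoc (spow x k) (spow x k) _]
      cases k with
      | zero => exact Or.inr ⟨u * u, h2⟩
      | succ k' =>
          refine Or.inr ⟨spow x k' * (u * u), ?_⟩
          rw [← mul_assoc, spow_add, h2]
          congr 2
          omega
  · rcases A4 with h' | ⟨u, h'⟩
    · have h2 : e = spow x (k + k + 1) := by rw [← spow_add, ← h', he]
      cases k with
      | zero => exact Or.inl h2
      | succ k' =>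
          refine Or.inr ⟨spow x k', ?_⟩
          rw [spow_add, h2]
          congr 1
          omega
    · have h2 : e = (u * u) * spow x (k + k + 1) := by
        conv_lhs => rw [← he]
        rw [h', ← spow_add]
        rw [mul_assoc, ← mul_assoc (spow x k) u (spow x k), cen_spow hc k u,
          ← mul_assoc, ← mul_assoc, mul_assoc (u*u)]
      cases k with
      | zero => exact Or.inr ⟨u * u, h2⟩
      | succ k' =>
          refine Or.inr ⟨(u * u) * spow x k', ?_⟩
          rw [mul_assoc, spow_add, h2]
          congr 2
          omega

lemma mono {x : X} (hc : Cen x) {k j : ℕ} (hkj : k ≤ j) (hk : spow x k ∈ HClass e) :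
    spow x j ∈ HClass e := by
  induction j, hkj using Nat.le_induction with
  | base => exact hk
  | succ j hj ih => exact mono_step e he hc ih

lemma prodH {g h : X} (hgc : Cen g) (hhc : Cen h) (hg : g ∈ HClass e) (hh : h ∈ HClass e) :
    g * h ∈ HClass e := by
  obtain ⟨-, -, G3, G4⟩ := (memH_iff e g).1 hg
  obtain ⟨-, -, H3, H4⟩ := (memH_iff e h).1 hh
  refine (memH_iff e _).2 ⟨Or.inr ⟨g * h, by rw [← mul_assoc, H_left_id e he hg]⟩,
    Or.inr ⟨g * h, by rw [mul_assoc, H_right_id e he hh]⟩, ?_, ?_⟩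
  · rcases G3 with hG | ⟨u, hG⟩ <;> rcases H3 with hH | ⟨v, hH⟩
    · exact Or.inl (by rw [← hG, ← hH]; exact he.symm)
    · refine Or.inr ⟨v, ?_⟩
      calc e = e * e := he.symm
      _ = g * (h * v) := by rw [← hG, ← hH]
      _ = (g * h) * v := by rw [mul_assoc]
    · refine Or.inr ⟨u, ?_⟩
      calc e = e * e := he.symm
      _ = (g * u) * h := by rw [← hG, ← hH]
      _ = (g * h) * u := by rw [mul_assoc, ← hhc u, ← mul_assoc]
    · refine Or.inr ⟨u * v, ?_⟩
      calc e = e * e := he.symm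
      _ = (g * u) * (h * v) := by rw [← hG, ← hH]
      _ = (g * h) * (u * v) := by
            rw [mul_assoc, ← mul_assoc u h v, ← hhc u, mul_assoc h u v, ← mul_assoc]
  · rcases G4 with hG | ⟨u, hG⟩ <;> rcases H4 with hH | ⟨v, hH⟩
    · exact Or.inl (by rw [← hG, ← hH]; exact he.symm)
    · refine Or.inr ⟨v, ?_⟩
      calc e = e * e := he.symm
      _ = (v * h) * g := by rw [← hG, ← hH]
      _ = v * (g * h) := by rw [mul_assoc, hhc g]
    · refine Or.inr ⟨u, ?_⟩
      calc e = e * e := he.symm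
      _ = (u * g) * h := by rw [← hG, ← hH]
      _ = u * (g * h) := by rw [mul_assoc]
    · refine Or.inr ⟨v * u, ?_⟩
      calc e = e * e := he.symm
      _ = (v * h) * (u * g) := by rw [← hG, ← hH]
      _ = (v * u) * (g * h) := by
            rw [mul_assoc, ← mul_assoc h u g, hhc u, mul_assoc u h g, hhc g, ← mul_assoc]

lemma hcov {f : X} (hc : Cen f) (hm : ∃ m, spow f m ∈ HClass e) :
    ∀ h ∈ HClass e, ∃ w, h = f * w := by
  intro h hh
  obtain ⟨m, hmH⟩ := hm
  have hg : spow f (m + 1) ∈ HClass e := mono_step e he hc hmH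
  rcases H_right_div e hg hh with h' | ⟨u, h'⟩
  · exact ⟨spow f m, by rw [h', spow_succ']⟩
  · exact ⟨spow f m * u, by rw [h', spow_succ', mul_assoc]⟩


omit he in
lemma pigeon {β γ : Type*} {B : Set β} (hB : B.Infinite) {V : Set γ} (hV : V.Finite)
    (g : β → γ) (hg : ∀ b ∈ B, g b ∈ V) : ∃ v ∈ V, {b ∈ B | g b = v}.Infinite := by
  by_contra h
  push_neg at h
  have hsub : B ⊆ ⋃ v ∈ V, {b ∈ B | g b = v} := fun b hb => Set.mem_biUnion (hg b hb) ⟨hb, rfl⟩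
  exact hB (Set.Finite.subset (hV.biUnion fun v hv => h v hv) hsub)

lemma case_one (W : Set X) (hW : W.Infinite)
    (hWm : ∀ z ∈ W, Cen z ∧ spow z 1 ∈ HClass e ∧ z ∉ HClass e) :
    ∃ (f : X) (A : Set X), Cen f ∧ spow f 1 ∈ HClass e ∧ A.Infinite ∧
      (∀ a ∈ A, Cen a ∧ spow a 1 ∈ HClass e) ∧ (∀ a ∈ A, a ≠ f ∧ ∀ y, a ≠ f * y) ∧
      (∀ a ∈ A, ∀ b ∈ A, a * b ∈ ({f} : Set X) ∪ HClass e) := by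
  classical
  have sq1 : ∀ z : X, spow z 1 = z * z := fun z => rfl
  have sqH : ∀ z ∈ W, z * z ∈ HClass e := fun z hz => by rw [← sq1]; exact (hWm z hz).2.1
  have pp : ∀ z w : X, z ∈ W → w ∈ W → spow (z * w) 1 ∈ HClass e := by
    intro z w hz hw
    rw [cen_spow_mul (hWm z hz).1]
    exact prodH e he (cen_spow (hWm z hz).1 1) (cen_spow (hWm w hw).1 1)
      (hWm z hz).2.1 (hWm w hw).2.1
  -- a product of the form (g * w) with g ∈ H, which is central with a power in H, lies in H
  have gtrick : ∀ x g w : X, Cen x → (∃ m, spow x m ∈ HClass e) → g ∈ HClass e →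
      x = g * w → x ∈ HClass e := by
    intro x g w hc hm hg hx
    refine eabs e hc hm ?_
    rw [hx, ← mul_assoc, H_left_id e he hg]
  -- finisher when all products lie in H
  have finish_allH : ∀ A : Set X, A.Infinite →
      (∀ c ∈ A, Cen c ∧ spow c 1 ∈ HClass e ∧ c ∉ HClass e) →
      (∀ a ∈ A, ∀ b ∈ A, a * b ∈ HClass e) →
      ∃ (f : X) (A' : Set X), Cen f ∧ spow f 1 ∈ HClass e ∧ A'.Infinite ∧
        (∀ a ∈ A', Cen a ∧ spow a 1 ∈ HClass e) ∧ (∀ a ∈ A', a ≠ f ∧ ∀ y, a ≠ f * y) ∧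
        (∀ a ∈ A', ∀ b ∈ A', a * b ∈ ({f} : Set X) ∪ HClass e) := by
    intro A hAinf hAp hAA
    obtain ⟨c₀, hc₀⟩ := hAinf.nonempty
    have hf : c₀ * c₀ ∈ HClass e := hAA c₀ hc₀ c₀ hc₀
    have hfc : Cen (c₀ * c₀) := (hAp c₀ hc₀).1.mul (hAp c₀ hc₀).1
    refine ⟨c₀ * c₀, A, hfc, ?_, hAinf, fun a ha => ⟨(hAp a ha).1, (hAp a ha).2.1⟩, ?_, ?_⟩
    · rw [sq1]; exact prodH e he hfc hfc hf hf
    · intro a ha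
      constructor
      · intro hEq; exact (hAp a ha).2.2 (by rw [hEq]; exact hf)
      · intro y hy
        exact (hAp a ha).2.2 (gtrick a (c₀ * c₀) y (hAp a ha).1 ⟨1, (hAp a ha).2.1⟩ hf hy)
    · exact fun a ha b hb => Or.inr (hAA a ha b hb)
  by_cases hrow : ∃ a ∈ W, {c | c ∉ HClass e ∧ ∃ b ∈ W, c = a * b}.Infinite
  · -- CASE I : some row has infinitely many non-H values
    obtain ⟨a, haW, hAinf⟩ := hrow
    refine finish_allH _ hAinf ?_ ?_
    · rintro c ⟨hcH, b, hbW, rfl⟩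
      exact ⟨(hWm a haW).1.mul (hWm b hbW).1, pp a b haW hbW, hcH⟩
    · rintro c ⟨hcH, b, hbW, rfl⟩ c' ⟨hcH', b', hbW', rfl⟩
      have hre : (a * b) * (a * b') = (a * a) * (b * b') := rearr (hWm b hbW).1 a b'
      refine gtrick _ (a * a) (b * b')
        (((hWm a haW).1.mul (hWm b hbW).1).mul ((hWm a haW).1.mul (hWm b' hbW').1))
        ⟨1, ?_⟩ (sqH a haW) hre
      rw [cen_spow_mul ((hWm a haW).1.mul (hWm b hbW).1)]
      exact prodH e he (cen_spow ((hWm a haW).1.mul (hWm b hbW).1) 1)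
        (cen_spow ((hWm a haW).1.mul (hWm b' hbW').1) 1) (pp a b haW hbW) (pp a b' haW hbW')
  · -- CASE II : all rows have finitely many non-H values
    push_neg at hrow
    have step : ∀ B : Set X, B ⊆ W → B.Infinite →
        ∃ (a : X) (B' : Set X) (q : Option X), a ∈ B ∧ B' ⊆ B ∧ a ∉ B' ∧ B'.Infinite ∧
          ((q = none ∧ ∀ b ∈ B', a * b ∈ HClass e) ∨
           (∃ v, q = some v ∧ v ∉ HClass e ∧ ∀ b ∈ B', a * b = v)) := by
      intro B hBW hBinf
      obtain ⟨a, haB⟩ := hBinf.nonempty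
      have hB0 : (B \ {a}).Infinite := hBinf.diff (Set.finite_singleton a)
      by_cases hC : {b ∈ B \ {a} | a * b ∈ HClass e}.Infinite
      · refine ⟨a, _, none, haB, fun b hb => hb.1.1, fun h => h.1.2 rfl, hC,
          Or.inl ⟨rfl, fun b hb => hb.2⟩⟩
      · have hD : ((B \ {a}) \ {b ∈ B \ {a} | a * b ∈ HClass e}).Infinite :=
          hB0.diff (Set.not_infinite.1 hC)
        obtain ⟨v, hvV, hfib⟩ := pigeon hD (hrow a (hBW haB)) (fun b => a * b)
          (fun b hb => ⟨fun h => hb.2 ⟨hb.1, h⟩, ⟨b, hBW hb.1.1, rfl⟩⟩)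
        refine ⟨a, _, some v, haB, fun b hb => hb.1.1.1, fun h => h.1.1.2 rfl, hfib,
          Or.inr ⟨v, rfl, hvV.1, fun b hb => hb.2⟩⟩
    choose af Bf qf hmema hsubB hnmem hinfB hcase using step
    let seq : ℕ → {B : Set X // B ⊆ W ∧ B.Infinite} := fun n =>
      Nat.rec ⟨W, subset_rfl, hW⟩
        (fun _ p => ⟨Bf p.1 p.2.1 p.2.2, (hsubB p.1 p.2.1 p.2.2).trans p.2.1,
          hinfB p.1 p.2.1 p.2.2⟩) n
    let a : ℕ → X := fun n => af (seq n).1 (seq n).2.1 (seq n).2.2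
    let q : ℕ → Option X := fun n => qf (seq n).1 (seq n).2.1 (seq n).2.2
    have ha_mem : ∀ n, a n ∈ (seq n).1 := fun n => hmema _ _ _
    have haW : ∀ n, a n ∈ W := fun n => (seq n).2.1 (ha_mem n)
    have hsucc : ∀ n, (seq (n+1)).1 = Bf (seq n).1 (seq n).2.1 (seq n).2.2 := fun n => rfl
    have hsub' : ∀ n, (seq (n+1)).1 ⊆ (seq n).1 := fun n => by
      rw [hsucc n]; exact hsubB _ _ _
    have hnot' : ∀ n, a n ∉ (seq (n+1)).1 := fun n => by
      rw [hsucc n]; exact hnmem _ _ _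
    have hchain : ∀ i j, i < j → (seq j).1 ⊆ (seq (i+1)).1 := by
      intro i j hij
      induction j with
      | zero => omega
      | succ j ih =>
          rcases Nat.lt_or_ge i j with h | h
          · exact (hsub' j).trans (ih h)
          · have : i = j := by omega
            subst this; exact subset_rfl
    have hprod : ∀ i j, i < j →
        (q i = none → a i * a j ∈ HClass e) ∧ (∀ v, q i = some v → a i * a j = v) := by
      intro i j hij
      have hj : a j ∈ (seq (i+1)).1 := hchain i j hij (ha_mem j)
      rw [hsucc i] at hj
      rcases hcase (seq i).1 (seq i).2.1 (seq i).2.2 with ⟨hq, hall⟩ | ⟨v, hq, hvH, hall⟩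
      · refine ⟨fun _ => hall _ hj, fun v hv => ?_⟩
        rw [show q i = qf (seq i).1 (seq i).2.1 (seq i).2.2 from rfl, hq] at hv
        cases hv
      · refine ⟨fun h => ?_, fun v' hv' => ?_⟩
        · rw [show q i = qf (seq i).1 (seq i).2.1 (seq i).2.2 from rfl, hq] at h
          cases h
        rw [show q i = qf (seq i).1 (seq i).2.1 (seq i).2.2 from rfl, hq] at hv'
        cases hv'
        exact hall _ hj
    have hqvH : ∀ i v, q i = some v → v ∉ HClass e := by
      intro i v hv
      rcases hcase (seq i).1 (seq i).2.1 (seq i).2.2 with ⟨hq, -⟩ | ⟨v', hq, hvH, -⟩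
      · rw [show q i = qf (seq i).1 (seq i).2.1 (seq i).2.2 from rfl, hq] at hv; cases hv
      · rw [show q i = qf (seq i).1 (seq i).2.1 (seq i).2.2 from rfl, hq] at hv
        cases hv; exact hvH
    have hainj : ∀ i j, i < j → a i ≠ a j := by
      intro i j hij heq
      exact hnot' i (heq ▸ hchain i j hij (ha_mem j))
    by_cases hS : {i : ℕ | q i = none}.Infinite
    · -- infinitely many "independent" steps
      have hinjOn : Set.InjOn a {i : ℕ | q i = none} := by
        intro i hi j hj heq
        by_contra hne
        rcases Nat.lt_or_ge i j with h | h
        · exact hainj i j h heq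
        · exact hainj j i (by omega) heq.symm
      refine finish_allH (a '' {i : ℕ | q i = none}) (hS.image hinjOn) ?_ ?_
      · rintro c ⟨i, hi, rfl⟩
        exact ⟨(hWm _ (haW i)).1, (hWm _ (haW i)).2.1, (hWm _ (haW i)).2.2⟩
      · rintro x ⟨i, hi, rfl⟩ y ⟨j, hj, rfl⟩
        rcases lt_trichotomy i j with h | h | h
        · exact (hprod i j h).1 hi
        · subst h; exact sqH _ (haW i)
        · rw [(hWm _ (haW i)).1 (a j)]
          exact (hprod j i h).1 hj
    · -- cofinitely many steps have a constant non-H value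
      have hT : {i : ℕ | q i ≠ none}.Infinite := by
        have := (Set.not_infinite.1 hS).infinite_compl
        exact this
      set v : ℕ → X := fun i => (q i).getD e with hv
      have hqT : ∀ i, q i ≠ none → q i = some (v i) := by
        intro i hi
        cases h : q i with
        | none => exact absurd h hi
        | some w => simp [hv, h]
      have hvrep : ∀ i j, i < j → q i ≠ none → a i * a j = v i := by
        intro i j hij hi
        exact (hprod i j hij).2 (v i) (hqT i hi)
      have hvH : ∀ i, q i ≠ none → v i ∉ HClass e := fun i hi => hqvH i (v i) (hqT i hi)
      have hvW : ∀ i, q i ≠ none → Cen (v i) ∧ spow (v i) 1 ∈ HClass e := by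
        intro i hi
        have h1 : a i * a (i+1) = v i := hvrep i (i+1) (by omega) hi
        rw [← h1]
        exact ⟨(hWm _ (haW i)).1.mul (hWm _ (haW (i+1))).1, pp _ _ (haW i) (haW (i+1))⟩
      by_cases hVim : (v '' {i : ℕ | q i ≠ none}).Infinite
      · -- infinitely many distinct values
        refine finish_allH _ hVim ?_ ?_
        · rintro c ⟨i, hi, rfl⟩
          exact ⟨(hvW i hi).1, (hvW i hi).2, hvH i hi⟩
        · rintro x ⟨i, hi, rfl⟩ y ⟨j, hj, rfl⟩
          -- wlog i ≤ j
          have key : ∀ i j, q i ≠ none → q j ≠ none → i < j → v i * v j ∈ HClass e := by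
            intro i j hi hj hij
            have h1 : v i = a i * a j := (hvrep i j hij hi).symm
            have h2 : v j = a j * a (j+1) := (hvrep j (j+1) (by omega) hj).symm
            have h3 : v i * v j = (a j * a j) * (a i * a (j+1)) := by
              rw [h1, h2, (hWm _ (haW i)).1 (a j), rearr (hWm _ (haW i)).1]
            refine gtrick _ (a j * a j) (a i * a (j+1)) ((hvW i hi).1.mul ((hvW j hj).1))
              ⟨1, ?_⟩ (sqH _ (haW j)) h3
            rw [cen_spow_mul (hvW i hi).1]
            exact prodH e he (cen_spow (hvW i hi).1 1) (cen_spow (hvW j hj).1 1)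
              (hvW i hi).2 (hvW j hj).2
          rcases lt_trichotomy i j with h | h | h
          · exact key i j hi hj h
          · subst h; rw [← sq1]; exact (hvW i hi).2
          · rw [(hvW i hi).1 (v j)]; exact key j i hj hi h
      · -- constant value p on an infinite set
        obtain ⟨p, -, hfib⟩ := pigeon hT (Set.not_infinite.1 hVim) v
          (fun i hi => ⟨i, hi, rfl⟩)
        set S' := {i ∈ {i : ℕ | q i ≠ none} | v i = p} with hS'
        have hS'q : ∀ i ∈ S', q i ≠ none := fun i hi => hi.1
        have hS'v : ∀ i ∈ S', v i = p := fun i hi => hi.2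
        have hrepr : ∀ i ∈ S', ∀ j, i < j → a i * a j = p := by
          intro i hi j hij
          rw [hvrep i j hij (hS'q i hi), hS'v i hi]
        obtain ⟨i₀, hi₀S, -⟩ := hfib.exists_gt 0
        have hpH : p ∉ HClass e := by
          rw [← hS'v i₀ hi₀S]; exact hvH i₀ (hS'q i₀ hi₀S)
        have hpW : Cen p ∧ spow p 1 ∈ HClass e := by
          rw [← hS'v i₀ hi₀S]; exact hvW i₀ (hS'q i₀ hi₀S)
        have hinjOn : Set.InjOn a S' := by
          intro i hi j hj heq
          by_contra hne
          rcases Nat.lt_or_ge i j with h | h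
          · exact hainj i j h heq
          · exact hainj j i (by omega) heq.symm
        refine ⟨p, a '' S', hpW.1, hpW.2, hfib.image hinjOn, ?_, ?_, ?_⟩
        · rintro x ⟨i, hi, rfl⟩
          exact ⟨(hWm _ (haW i)).1, (hWm _ (haW i)).2.1⟩
        · rintro x ⟨k, hk, rfl⟩
          constructor
          · -- a k ≠ p
            intro hak
            obtain ⟨m, hmS, hkm⟩ := hfib.exists_gt k
            have h1 : a k * a m = p := hrepr k hk m hkm
            -- but p * a m ∈ H
            obtain ⟨i, hiS, hmi⟩ := hfib.exists_gt m
            have h2 : p = a m * a i := (hrepr m hmS i hmi).symm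
            have h3 : p * a m = (a m * a m) * a i := by
              rw [h2, mul_assoc, (hWm _ (haW i)).1 (a m), ← mul_assoc]
            have h4 : p * a m ∈ HClass e := by
              refine gtrick _ (a m * a m) (a i) (hpW.1.mul (hWm _ (haW m)).1)
                ⟨1, ?_⟩ (sqH _ (haW m)) h3
              rw [cen_spow_mul hpW.1]
              exact prodH e he (cen_spow hpW.1 1) (cen_spow (hWm _ (haW m)).1 1)
                hpW.2 (hWm _ (haW m)).2.1
            rw [← hak, h1] at h4
            exact hpH h4
          · -- a k ≠ p * y
            intro y hky
            obtain ⟨i, hiS, hki⟩ := hfib.exists_gt k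
            have h1 : a k * a i = p := hrepr k hk i hki
            have h2 : p = a i * a (i+1) := (hrepr i hiS (i+1) (by omega)).symm
            have h3 : a k * a i = (a i * a i) * (a (i+1) * y) := by
              rw [hky, h2, ← (hWm _ (haW i)).1 (a i * a (i+1) * y)]
              simp only [mul_assoc]
            have h4 : a k * a i ∈ HClass e := by
              refine gtrick _ (a i * a i) (a (i+1) * y)
                ((hWm _ (haW k)).1.mul (hWm _ (haW i)).1) ⟨1, ?_⟩ (sqH _ (haW i)) h3
              exact pp _ _ (haW k) (haW i)
            rw [h1] at h4
            exact hpH h4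
        · rintro x ⟨i, hi, rfl⟩ y ⟨j, hj, rfl⟩
          rcases lt_trichotomy i j with h | h | h
          · exact Or.inl (by rw [hrepr i hi j h]; rfl)
          · subst h; exact Or.inr (sqH _ (haW i))
          · refine Or.inl ?_
            rw [(hWm _ (haW i)).1 (a j), hrepr j hj i h]
            rfl

end Aux

theorem statement17 {X : Type*} [Semigroup X]
    (hper : IsPeriodicSemigroup X)
    (e : X) (he : IsIdempotentElem e)
    (ℓ : ℕ)
    (hinf : {z : X | z ∈ centerSet X ∧ spow z ℓ ∈ HClass e ∧ z ∉ HClass e}.Infinite) :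
    ∃ F A : Set X, F.Finite ∧
      F ⊆ {z : X | z ∈ centerSet X ∧ spow z ℓ ∈ HClass e} ∧
      A.Infinite ∧
      A ⊆ {z : X | z ∈ centerSet X ∧ spow z ℓ ∈ HClass e} \
            (F ∪ Set.image2 (· * ·) F (Set.univ : Set X)) ∧
      Set.image2 (· * ·) A A ⊆ F ∪ HClass e ∧
      F ∪ HClass e ⊆ F ∪ Set.image2 (· * ·) F (Set.univ : Set X) := by
  classical
  set I : ℕ → Set X := fun k => {z | Cen z ∧ spow z k ∈ HClass e ∧ z ∉ HClass e} with hI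
  have hIl : (I ℓ).Infinite := hinf
  have hP : ∃ k, (I k).Infinite := ⟨ℓ, hIl⟩
  have hn : (I (Nat.find hP)).Infinite := Nat.find_spec hP
  set n := Nat.find hP with hndef
  have hmin : ∀ k, k < n → (I k).Finite := fun k hk => Set.not_infinite.1 (Nat.find_min hP hk)
  have hnl : n ≤ ℓ := Nat.find_min' hP hIl
  have hn1 : 1 ≤ n := by
    rcases Nat.eq_zero_or_pos n with h0 | h
    · exfalso
      rw [h0] at hn
      obtain ⟨z, hz⟩ := hn.nonempty
      exact hz.2.2 hz.2.1
    · exact h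
  have hl1 : 1 ≤ ℓ := le_trans hn1 hnl
  have master : ∀ F A : Set X, F.Finite → (∀ f ∈ F, Cen f ∧ spow f ℓ ∈ HClass e) →
      A.Infinite → (∀ a ∈ A, Cen a ∧ spow a ℓ ∈ HClass e) →
      (∀ a ∈ A, a ∉ F) → (∀ a ∈ A, ∀ f ∈ F, ∀ y : X, a ≠ f * y) →
      (∀ a ∈ A, ∀ b ∈ A, a * b ∈ F ∪ HClass e) →
      (∃ t ∈ F, Cen t ∧ ∃ m, spow t m ∈ HClass e) →
      (∃ F A : Set X, F.Finite ∧
        F ⊆ {z : X | z ∈ centerSet X ∧ spow z ℓ ∈ HClass e} ∧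
        A.Infinite ∧
        A ⊆ {z : X | z ∈ centerSet X ∧ spow z ℓ ∈ HClass e} \
              (F ∪ Set.image2 (· * ·) F (Set.univ : Set X)) ∧
        Set.image2 (· * ·) A A ⊆ F ∪ HClass e ∧
        F ∪ HClass e ⊆ F ∪ Set.image2 (· * ·) F (Set.univ : Set X)) := by
    rintro F A hFfin hFZ hAinf hAZ hAF hAFX hAA ⟨t, htF, htc, htm⟩
    refine ⟨F, A, hFfin, fun f hf => hFZ f hf, hAinf, ?_, ?_, ?_⟩
    · intro x hx
      refine ⟨hAZ x hx, ?_⟩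
      rintro (h | h)
      · exact hAF x hx h
      · obtain ⟨f, hf, y, -, hxy⟩ := h
        exact hAFX x hx f hf y hxy.symm
    · rintro z ⟨x, hx, y, hy, rfl⟩
      exact hAA x hx y hy
    · rintro x (h | h)
      · exact Or.inl h
      · obtain ⟨w, hw⟩ := hcov e he htc htm x h
        exact Or.inr ⟨t, htF, w, Set.mem_univ w, hw.symm⟩
  rcases Nat.lt_or_ge 1 n with h2n | h1n
  · -- n ≥ 2
    have hI1fin : (I 1).Finite := hmin 1 h2n
    have hIn1fin : (I (n-1)).Finite := hmin (n-1) (by omega)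
    have hJ : (I n \ I (n-1)).Infinite := hn.diff hIn1fin
    have hJmem : ∀ x ∈ I n \ I (n-1),
        Cen x ∧ spow x n ∈ HClass e ∧ x ∉ HClass e ∧ spow x (n-1) ∉ HClass e := by
      rintro x ⟨⟨hc, hp, hnH⟩, hnot⟩
      exact ⟨hc, hp, hnH, fun h => hnot ⟨hc, h, hnH⟩⟩
    have hmapI1 : ∀ x ∈ I n \ I (n-1), spow x (n-1) ∈ I 1 := by
      intro x hx
      obtain ⟨hc, hp, hnH, hq⟩ := hJmem x hx
      refine ⟨cen_spow hc _, ?_, hq⟩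
      rw [spow_spow]
      exact mono e he hc (by omega) hp
    obtain ⟨t, htI1, hfib⟩ := pigeon hJ hI1fin _ hmapI1
    apply master (I (n-1)) {x ∈ I n \ I (n-1) | spow x (n-1) = t} hIn1fin
    · rintro f ⟨hc, hp, hnH⟩
      exact ⟨hc, mono e he hc (by omega) hp⟩
    · exact hfib
    · intro x hx
      obtain ⟨hc, hp, -, -⟩ := hJmem x hx.1
      exact ⟨hc, mono e he hc hnl hp⟩
    · intro x hx hxF
      exact (hJmem x hx.1).2.2.2 hxF.2.1
    · intro x hx f hf y hxy
      obtain ⟨hcx, hpx, -, hq⟩ := hJmem x hx.1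
      obtain ⟨hcf, hpf, -⟩ := hf
      apply hq
      have h1 : spow x (n-1) = spow f (n-1) * spow y (n-1) := by
        rw [hxy]; exact cen_spow_mul hcf y (n-1)
      refine eabs e (cen_spow hcx _) ⟨n, ?_⟩ ?_
      · rw [spow_spow]
        exact mono e he hcx (le_trans (Nat.le_add_left n (n-1)) (Nat.le_add_right _ _)) hpx
      · rw [h1, ← mul_assoc, H_left_id e he hpf]
    · intro x hx y hy
      by_cases hp : x * y ∈ HClass e
      · exact Or.inr hp
      · refine Or.inl ⟨(hJmem x hx.1).1.mul (hJmem y hy.1).1, ?_, hp⟩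
        rw [cen_spow_mul (hJmem x hx.1).1, hx.2, hy.2]
        exact htI1.2.1
    · exact ⟨t, ⟨htI1.1, mono e he htI1.1 (by omega) htI1.2.1, htI1.2.2⟩, htI1.1, 1, htI1.2.1⟩
  · -- n = 1
    have hn1' : n = 1 := le_antisymm h1n hn1
    have hW : (I 1).Infinite := by rw [← hn1']; exact hn
    obtain ⟨f, A, hfc, hf1, hAinf, hAm, hAnf, hAA⟩ :=
      case_one e he (I 1) hW (fun z hz => ⟨hz.1, hz.2.1, hz.2.2⟩)
    apply master {f} A (Set.finite_singleton f)
    · rintro g hg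
      rw [Set.mem_singleton_iff] at hg
      subst hg
      exact ⟨hfc, mono e he hfc hl1 hf1⟩
    · exact hAinf
    · intro x hx
      exact ⟨(hAm x hx).1, mono e he (hAm x hx).1 hl1 (hAm x hx).2⟩
    · intro x hx hxF
      rw [Set.mem_singleton_iff] at hxF
      exact (hAnf x hx).1 hxF
    · intro x hx g hg y
      rw [Set.mem_singleton_iff] at hg
      subst hg
      exact (hAnf x hx).2 y
    · exact fun x hx y hy => hAA x hx y hy
    · exact ⟨f, rfl, hfc, 1, hf1⟩
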